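/- Let G be a finite simple graph that is vertex decomposable. Then for every vertex x of G, the graph G \ N[x] obtained by deleting the closed neighbourhood of x is vertex decomposable. Consequently, Shed(G) = {x ∈ V(G) : G \ x is vertex decomposable}. -/

import Mathlib

open scoped Classical

variable {V : Type*}

/-- `S` is an independent set of the induced subgraph of `G` on the vertex set `A`. -/
def IsIndepIn (G : SimpleGraph V) (A S : Finset V) : Prop :=
  S ⊆ A ∧ ∀ u ∈ S, ∀ v ∈ S, ¬ G.Adj u v

/-- `S` is a maximal independent set of the induced subgraph of `G` on the vertex set `A`. -/
def IsMaxIndepIn (G : SimpleGraph V) (A S : Finset V) : Prop :=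
  IsIndepIn G A S ∧ ∀ T, IsIndepIn G A T → S ⊆ T → T = S

/-- The induced subgraph of `G` on the vertex set `A` is well-covered: all of its
maximal independent sets have the same cardinality. -/
def WellCoveredOn (G : SimpleGraph V) (A : Finset V) : Prop :=
  ∀ S T, IsMaxIndepIn G A S → IsMaxIndepIn G A T → S.card = T.card

/-- The closed neighbourhood of `x` deleted from `A`: the vertices of `A` distinct from `x`
and not adjacent to `x`. -/
noncomputable def delClosedNbhd (G : SimpleGraph V) (A : Finset V) (x : V) : Finset V :=
  A.filter fun y => y ≠ x ∧ ¬ G.Adj x y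

/-- The induced subgraph of `G` on the vertex set `A` is vertex decomposable: it is
well-covered, and either it has no edges, or some vertex `x ∈ A` is such that deleting `x`,
respectively the closed neighbourhood of `x`, leaves a vertex decomposable graph. -/
def VertexDecomposableOn (G : SimpleGraph V) (A : Finset V) : Prop :=
  WellCoveredOn G A ∧
    ((∀ u ∈ A, ∀ v ∈ A, ¬ G.Adj u v) ∨
      ∃ x, ∃ _h : x ∈ A,
        VertexDecomposableOn G (A.erase x) ∧
        VertexDecomposableOn G (delClosedNbhd G A x))
termination_by A.card
decreasing_by
  · exact Finset.card_erase_lt_of_mem (by assumption)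
  · exact Finset.card_lt_card
      (Finset.filter_ssubset.mpr ⟨x, by assumption, by simp⟩)

/-- A finite simple graph is well-covered if all of its maximal independent sets have the
same cardinality. -/
def WellCovered (G : SimpleGraph V) [Fintype V] : Prop :=
  WellCoveredOn G Finset.univ

/-- A finite simple graph is vertex decomposable. -/
def VertexDecomposable (G : SimpleGraph V) [Fintype V] : Prop :=
  VertexDecomposableOn G Finset.univ

/-- The set of shedding vertices of `G` : those vertices `x` such that both `G \ x` and
`G \ N[x]` are vertex decomposable. -/
def Shed (G : SimpleGraph V) [Fintype V] : Set V :=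
  {x | VertexDecomposableOn G (Finset.univ.erase x) ∧
       VertexDecomposableOn G (delClosedNbhd G Finset.univ x)}

/-- `D` is a dominating set of `G`: every vertex not in `D` is adjacent to a vertex of `D`. -/
def IsDominatingSet (G : SimpleGraph V) (D : Set V) : Prop :=
  ∀ v, v ∉ D → ∃ u ∈ D, G.Adj u v

/-- A vertex is simplicial if its neighbourhood induces a clique. -/
def IsSimplicialVertex (G : SimpleGraph V) (x : V) : Prop :=
  ∀ u v, G.Adj x u → G.Adj x v → u ≠ v → G.Adj u v

lemma mem_delClosedNbhd {G : SimpleGraph V} {A : Finset V} {x y : V} :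
    y ∈ delClosedNbhd G A x ↔ y ∈ A ∧ y ≠ x ∧ ¬ G.Adj x y := by
  simp [delClosedNbhd]

lemma wellCovered_del (G : SimpleGraph V) {A : Finset V} {x : V} (hx : x ∈ A)
    (h : WellCoveredOn G A) : WellCoveredOn G (delClosedNbhd G A x) := by
  have key : ∀ S, IsMaxIndepIn G (delClosedNbhd G A x) S →
      IsMaxIndepIn G A (insert x S) := by
    intro S ⟨⟨hSsub, hSind⟩, hSmax⟩
    have hSA : S ⊆ A := hSsub.trans (Finset.filter_subset _ _)
    refine ⟨⟨?_, ?_⟩, ?_⟩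
    · intro z hz
      rcases Finset.mem_insert.mp hz with rfl | hz
      · exact hx
      · exact hSA hz
    · intro u hu v hv hadj
      rcases Finset.mem_insert.mp hu with hu | hu <;>
        rcases Finset.mem_insert.mp hv with hv | hv
      · rw [hu, hv] at hadj; exact G.loopless.irrefl x hadj
      · rw [hu] at hadj; exact (mem_delClosedNbhd.mp (hSsub hv)).2.2 hadj
      · rw [hv] at hadj; exact (mem_delClosedNbhd.mp (hSsub hu)).2.2 hadj.symm
      · exact hSind u hu v hv hadj
    · intro T ⟨hTsub, hTind⟩ hST
      have hxT : x ∈ T := hST (Finset.mem_insert_self _ _)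
      have hTB : T.erase x ⊆ delClosedNbhd G A x := by
        intro z hz
        obtain ⟨hzx, hzT⟩ := Finset.mem_erase.mp hz
        exact mem_delClosedNbhd.mpr ⟨hTsub hzT, hzx, hTind x hxT z hzT⟩
      have hSsub' : S ⊆ T.erase x := by
        intro z hz
        refine Finset.mem_erase.mpr ⟨?_, hST (Finset.mem_insert_of_mem hz)⟩
        rintro rfl
        exact (mem_delClosedNbhd.mp (hSsub hz)).2.1 rfl
      have := hSmax (T.erase x)
        ⟨hTB, fun u hu v hv => hTind u (Finset.mem_of_mem_erase hu) v
          (Finset.mem_of_mem_erase hv)⟩ hSsub'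
      rw [← this]
      exact (Finset.insert_erase hxT).symm
  intro S T hS hT
  have hxS : x ∉ S := fun hxS => (mem_delClosedNbhd.mp (hS.1.1 hxS)).2.1 rfl
  have hxT : x ∉ T := fun hxT => (mem_delClosedNbhd.mp (hT.1.1 hxT)).2.1 rfl
  have := h _ _ (key S hS) (key T hT)
  rwa [Finset.card_insert_of_notMem hxS, Finset.card_insert_of_notMem hxT,
    Nat.add_right_cancel_iff] at this

lemma del_vd (G : SimpleGraph V) :
    ∀ A : Finset V, VertexDecomposableOn G A →
      ∀ x ∈ A, VertexDecomposableOn G (delClosedNbhd G A x) := by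
  intro A
  induction A using Finset.strongInduction with
  | _ A ih =>
    intro hA x hx
    rw [VertexDecomposableOn] at hA
    obtain ⟨hwc, hne | ⟨y, hy, hAy, hANy⟩⟩ := hA
    · rw [VertexDecomposableOn]
      refine ⟨wellCovered_del G hx hwc, Or.inl fun u hu v hv => ?_⟩
      exact hne u (Finset.filter_subset _ _ hu) v (Finset.filter_subset _ _ hv)
    · by_cases hyx : y = x
      · subst hyx; exact hANy
      · by_cases hadj : G.Adj x y
        · have hxA : x ∈ A.erase y := Finset.mem_erase.mpr ⟨fun h => hyx h.symm, hx⟩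
          have := ih (A.erase y) (Finset.erase_ssubset hy) hAy x hxA
          have heq : delClosedNbhd G (A.erase y) x = delClosedNbhd G A x := by
            ext z
            simp only [mem_delClosedNbhd, Finset.mem_erase]
            constructor
            · rintro ⟨⟨_, hz⟩, h2⟩; exact ⟨hz, h2⟩
            · rintro ⟨hz, h2⟩
              refine ⟨⟨?_, hz⟩, h2⟩
              rintro rfl; exact h2.2 hadj
          rwa [heq] at this
        · have hyB : y ∈ delClosedNbhd G A x := mem_delClosedNbhd.mpr ⟨hy, hyx, hadj⟩
          rw [VertexDecomposableOn]
          refine ⟨wellCovered_del G hx hwc, Or.inr ⟨y, hyB, ?_, ?_⟩⟩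
          · have hxA : x ∈ A.erase y := Finset.mem_erase.mpr ⟨fun h => hyx h.symm, hx⟩
            have := ih (A.erase y) (Finset.erase_ssubset hy) hAy x hxA
            have heq : delClosedNbhd G (A.erase y) x = (delClosedNbhd G A x).erase y := by
              ext z
              simp only [mem_delClosedNbhd, Finset.mem_erase]
              tauto
            rwa [heq] at this
          · have hsub : delClosedNbhd G A y ⊂ A :=
              Finset.filter_ssubset.mpr ⟨y, hy, by simp⟩
            have hxA : x ∈ delClosedNbhd G A y :=
              mem_delClosedNbhd.mpr ⟨hx, fun h => hyx h.symm, fun h => hadj h.symm⟩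
            have := ih _ hsub hANy x hxA
            have heq : delClosedNbhd G (delClosedNbhd G A y) x
                = delClosedNbhd G (delClosedNbhd G A x) y := by
              ext z
              simp only [mem_delClosedNbhd]
              tauto
            rwa [heq] at this

/-- If `G` is vertex decomposable, then `G \ N[x]` is vertex decomposable
for every vertex `x`; consequently `Shed(G)` is exactly the set of vertices `x` such that
`G \ x` is vertex decomposable. -/
theorem statement0 {V : Type*} [Fintype V] (G : SimpleGraph V)
    (hG : VertexDecomposable G) :
    (∀ x : V, VertexDecomposableOn G (delClosedNbhd G Finset.univ x)) ∧
    Shed G = {x : V | VertexDecomposableOn G (Finset.univ.erase x)} := by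
  have h1 : ∀ x : V, VertexDecomposableOn G (delClosedNbhd G Finset.univ x) :=
    fun x => del_vd G Finset.univ hG x (Finset.mem_univ x)
  refine ⟨h1, ?_⟩
  ext x
  simp only [Shed, Set.mem_setOf_eq]
  exact ⟨fun h => h.1, fun h => ⟨h, h1 x⟩⟩
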